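/- Let G be a group with a normal subgroup N of finite index, k an algebraically closed field, and V a simple kG-module. Then the restriction of V to N is semisimple and isomorphic to e·⊕_{i=1}^{t} U^{g_i}, a direct sum with uniform multiplicity e of the distinct G-conjugates of a simple kN-module U, where t = [G : I_G(U)] is the index of the inertia subgroup I_G(U) = {g ∈ G : U^g ≅ U}. -/

import Mathlib

variable {k V G : Type*}

/-- A submodule invariant under the restriction of `ρ` to the subgroup `N`. -/
def IsInvt [Field k] [AddCommGroup V] [Module k V] [Group G]
    (ρ : Representation k G V) (N : Subgroup G) (W : Submodule k V) : Prop :=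
  ∀ n ∈ N, ∀ v ∈ W, ρ n v ∈ W

/-- Two submodules of `V` are isomorphic as `N`-modules: there is a `k`-linear equivalence
intertwining the action of every `n ∈ N`. -/
def NEquiv [Field k] [AddCommGroup V] [Module k V] [Group G]
    (ρ : Representation k G V) (N : Subgroup G) (A B : Submodule k V) : Prop :=
  ∃ f : A ≃ₗ[k] B, ∀ n ∈ N, ∀ (x : V) (hx : x ∈ A) (hnx : ρ n x ∈ A),
    (f ⟨ρ n x, hnx⟩ : V) = ρ n (f ⟨x, hx⟩)

section helpers

variable [Field k] [AddCommGroup V] [Module k V] [Group G]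
  (ρ : Representation k G V) (N : Subgroup G)

/-- `ρ g` as a linear automorphism. -/
def rhoe (g : G) : V ≃ₗ[k] V :=
  LinearEquiv.ofLinear (ρ g) (ρ g⁻¹)
    (by ext v; simp [← Module.End.mul_apply, ← map_mul])
    (by ext v; simp [← Module.End.mul_apply, ← map_mul])

@[simp] lemma rhoe_apply (g : G) (v : V) : rhoe ρ g v = ρ g v := rfl

lemma map_map_rho (g h : G) (A : Submodule k V) :
    (A.map (ρ h)).map (ρ g) = A.map (ρ (g * h)) := by
  rw [← Submodule.map_comp, ← Module.End.mul_eq_comp, ← map_mul]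

lemma map_rho_one (A : Submodule k V) : A.map (ρ 1) = A := by
  rw [map_one, Module.End.one_eq_id, Submodule.map_id]

lemma invt_map {A : Submodule k V} (hN : N.Normal) (hA : IsInvt ρ N A) (g : G) :
    IsInvt ρ N (A.map (ρ g)) := by
  rintro n hn v ⟨a, ha, rfl⟩
  refine ⟨ρ (g⁻¹ * n * g) a, hA _ ?_ a ha, ?_⟩
  · have := hN.conj_mem n hn g⁻¹
    simpa [mul_assoc] using this
  · rw [← Module.End.mul_apply, ← map_mul, ← Module.End.mul_apply, ← map_mul]
    congr 2
    group

lemma map_rho_self {A : Submodule k V} (hA : IsInvt ρ N A) {n : G} (hn : n ∈ N) :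
    A.map (ρ n) = A := by
  apply le_antisymm
  · rintro v ⟨a, ha, rfl⟩; exact hA n hn a ha
  · intro v hv
    refine ⟨ρ n⁻¹ v, hA n⁻¹ (inv_mem hn) v hv, ?_⟩
    rw [← Module.End.mul_apply, ← map_mul, mul_inv_cancel, map_one, Module.End.one_apply]

lemma invt_iSup {ι : Sort*} {f : ι → Submodule k V} (hf : ∀ i, IsInvt ρ N (f i)) :
    IsInvt ρ N (⨆ i, f i) := by
  intro n hn v hv
  have : Submodule.map (ρ n) (⨆ i, f i) ≤ ⨆ i, f i := by
    rw [Submodule.map_iSup]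
    exact iSup_mono fun i => Submodule.map_le_iff_le_comap.2 fun w hw => hf i n hn w hw
  exact this ⟨v, hv, rfl⟩

lemma invt_sSup {s : Set (Submodule k V)} (hs : ∀ A ∈ s, IsInvt ρ N A) :
    IsInvt ρ N (sSup s) := by
  rw [sSup_eq_iSup']
  exact invt_iSup ρ N fun i => hs i i.2

lemma invt_inf {A B : Submodule k V} (hA : IsInvt ρ N A) (hB : IsInvt ρ N B) :
    IsInvt ρ N (A ⊓ B) := fun n hn v hv => ⟨hA n hn v hv.1, hB n hn v hv.2⟩

lemma nequiv_refl (A : Submodule k V) : NEquiv ρ N A A :=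
  ⟨LinearEquiv.refl k A, fun n _ x hx hnx => rfl⟩

lemma nequiv_symm {A B : Submodule k V} (hA : IsInvt ρ N A) (h : NEquiv ρ N A B) :
    NEquiv ρ N B A := by
  obtain ⟨f, hf⟩ := h
  refine ⟨f.symm, fun n hn y hy hny => ?_⟩
  set x : A := f.symm ⟨y, hy⟩ with hxdef
  have hnx : ρ n (x : V) ∈ A := hA n hn _ x.2
  have h1 : (f ⟨ρ n (x : V), hnx⟩ : V) = ρ n (f ⟨(x : V), x.2⟩) := hf n hn _ x.2 hnx
  have h2 : f ⟨(x : V), x.2⟩ = ⟨y, hy⟩ := by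
    rw [show (⟨(x : V), x.2⟩ : A) = x from rfl, hxdef, f.apply_symm_apply]
  have h3 : f ⟨ρ n (x : V), hnx⟩ = ⟨ρ n y, hny⟩ := by
    apply Subtype.ext; rw [h1, h2]
  have := congrArg f.symm h3
  rw [f.symm_apply_apply] at this
  rw [← this]

lemma nequiv_trans {A B C : Submodule k V} (hB : IsInvt ρ N B)
    (hab : NEquiv ρ N A B) (hbc : NEquiv ρ N B C) : NEquiv ρ N A C := by
  obtain ⟨f, hf⟩ := hab
  obtain ⟨g, hg⟩ := hbc
  refine ⟨f.trans g, fun n hn x hx hnx => ?_⟩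
  set y : B := f ⟨x, hx⟩ with hydef
  have hny : ρ n (y : V) ∈ B := hB n hn _ y.2
  have h3 : f ⟨ρ n x, hnx⟩ = ⟨ρ n (y : V), hny⟩ :=
    Subtype.ext (hf n hn x hx hnx)
  calc ((f.trans g) ⟨ρ n x, hnx⟩ : V) = (g (f ⟨ρ n x, hnx⟩) : V) := rfl
    _ = (g ⟨ρ n (y : V), hny⟩ : V) := by rw [h3]
    _ = ρ n (g ⟨(y : V), y.2⟩) := hg n hn _ y.2 hny
    _ = ρ n ((f.trans g) ⟨x, hx⟩) := rfl


lemma nequiv_map {A B : Submodule k V} (hN : N.Normal) (hA : IsInvt ρ N A)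
    (h : NEquiv ρ N A B) (g : G) :
    NEquiv ρ N (A.map (ρ g)) (B.map (ρ g)) := by
  obtain ⟨f, hf⟩ := h
  set e := rhoe ρ g with he
  refine ⟨(e.submoduleMap A).symm.trans (f.trans (e.submoduleMap B)), ?_⟩
  intro n hn x hx hnx
  show (ρ g) ((f ((e.submoduleMap A).symm ⟨ρ n x, hnx⟩) : V))
      = ρ n ((ρ g) ((f ((e.submoduleMap A).symm ⟨x, hx⟩) : V)))
  set m := g⁻¹ * n * g with hm
  have hmN : m ∈ N := by
    have := hN.conj_mem n hn g⁻¹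
    simpa [hm, mul_assoc] using this
  set sx : A := (e.submoduleMap A).symm ⟨x, hx⟩ with hsx
  have hsxc : (sx : V) = ρ g⁻¹ x := rfl
  have hmy : ρ m (sx : V) ∈ A := hA m hmN _ sx.2
  have hsnx : (e.submoduleMap A).symm ⟨ρ n x, hnx⟩ = ⟨ρ m (sx : V), hmy⟩ := by
    apply Subtype.ext
    show (e.symm (ρ n x) : V) = ρ m (sx : V)
    rw [hsxc]
    show ρ g⁻¹ (ρ n x) = ρ m (ρ g⁻¹ x)
    rw [← Module.End.mul_apply, ← Module.End.mul_apply, ← map_mul, ← map_mul, hm]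
    congr 2
    group
  rw [hsnx]
  have key : (f ⟨ρ m (sx : V), hmy⟩ : V) = ρ m (f ⟨(sx : V), sx.2⟩) :=
    hf m hmN _ sx.2 hmy
  have : (⟨(sx : V), sx.2⟩ : A) = sx := rfl
  rw [this] at key
  rw [key, ← Module.End.mul_apply, ← map_mul, ← Module.End.mul_apply (ρ n), ← map_mul]
  have : g * m = n * g := by rw [hm]; group
  rw [this]


/-- transport of minimality along `ρ g` -/
lemma min_map {A : Submodule k V} (hN : N.Normal)
    (hmin : ∀ W : Submodule k V, W ≤ A → IsInvt ρ N W → W = ⊥ ∨ W = A) (g : G) :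
    ∀ W : Submodule k V, W ≤ A.map (ρ g) → IsInvt ρ N W → W = ⊥ ∨ W = A.map (ρ g) := by
  intro W hW hWinv
  have hback : W.map (ρ g⁻¹) ≤ A := by
    calc W.map (ρ g⁻¹) ≤ (A.map (ρ g)).map (ρ g⁻¹) := Submodule.map_mono hW
      _ = A := by rw [map_map_rho, inv_mul_cancel, map_rho_one]
  have hfwd : (W.map (ρ g⁻¹)).map (ρ g) = W := by
    rw [map_map_rho, mul_inv_cancel, map_rho_one]
  rcases hmin (W.map (ρ g⁻¹)) hback (invt_map ρ N hN hWinv g⁻¹) with h0 | hEq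
  · left; rw [← hfwd, h0, Submodule.map_bot]
  · right; rw [← hfwd, hEq]

/-- Schur: an equivariant map between simple invariant submodules is zero or gives `NEquiv`. -/
lemma schur {A B : Submodule k V} (hA : IsInvt ρ N A) (hB : IsInvt ρ N B)
    (hAne : A ≠ ⊥)
    (hAmin : ∀ W : Submodule k V, W ≤ A → IsInvt ρ N W → W = ⊥ ∨ W = A)
    (hBmin : ∀ W : Submodule k V, W ≤ B → IsInvt ρ N W → W = ⊥ ∨ W = B)
    (φ : V →ₗ[k] V) (hφ : ∀ n ∈ N, ∀ v : V, φ (ρ n v) = ρ n (φ v))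
    (hφAB : ∀ v ∈ A, φ v ∈ B) :
    (∀ v ∈ A, φ v = 0) ∨ NEquiv ρ N A B := by
  classical
  set K := A ⊓ LinearMap.ker φ with hK
  have hKinv : IsInvt ρ N K := by
    rintro n hn v ⟨hvA, hvk⟩
    refine ⟨hA n hn v hvA, ?_⟩
    have hvk' : φ v = 0 := hvk
    show φ (ρ n v) = 0
    rw [hφ n hn, hvk', map_zero]
  set I := A.map φ with hI
  have hIB : I ≤ B := by rintro w ⟨a, ha, rfl⟩; exact hφAB a ha
  have hIinv : IsInvt ρ N I := by
    rintro n hn w ⟨a, ha, rfl⟩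
    exact ⟨ρ n a, hA n hn a ha, hφ n hn a⟩
  rcases hBmin I hIB hIinv with hI0 | hIeq
  · left; intro v hv
    have : φ v ∈ I := ⟨v, hv, rfl⟩
    rw [hI0] at this; simpa using this
  rcases hAmin K inf_le_left hKinv with hK0 | hKeq
  · right
    have hinj : ∀ v ∈ A, φ v = 0 → v = 0 := by
      intro v hv hv0
      have : v ∈ K := ⟨hv, by simpa using hv0⟩
      rw [hK0] at this; simpa using this
    set φ' : A →ₗ[k] B := (φ.comp A.subtype).codRestrict B (fun x => hφAB x x.2) with hφ'
    have hb : Function.Bijective φ' := by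
      constructor
      · intro x y hxy
        have : φ (x : V) = φ (y : V) := congrArg Subtype.val hxy
        have : φ ((x : V) - (y : V)) = 0 := by rw [map_sub, this, sub_self]
        have := hinj _ (sub_mem x.2 y.2) this
        exact Subtype.ext (by rwa [sub_eq_zero] at this)
      · intro b
        have : (b : V) ∈ I := hIeq ▸ b.2
        obtain ⟨a, ha, hab⟩ := this
        exact ⟨⟨a, ha⟩, Subtype.ext hab⟩
    refine ⟨LinearEquiv.ofBijective φ' hb, ?_⟩
    intro n hn x hx hnx
    show φ (ρ n x) = ρ n (φ x)
    exact hφ n hn x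
  · left
    intro v hv
    have : v ∈ K := hKeq ▸ hv
    simpa using this.2

end helpers

open FiniteDimensional Module

/-- **Clifford's theorem.**  Let `G` be a group, `N` a normal subgroup of finite index,
`k` an algebraically closed field, and `V` a (finite-dimensional, nonzero) simple
`kG`-module.  Then the restriction of `V` to `N` is semisimple: `V` is an internal direct
sum of `N`-submodules `W i j` (`i < t`, `j < e`), where `W i j` is `N`-isomorphic to the
conjugate `ρ(g i)·U` of a simple `N`-submodule `U`; the conjugates `ρ(g i)·U` are pairwise
non-isomorphic and every `G`-conjugate of `U` is isomorphic to one of them, so that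
`t = [G : I_G(U)]` is the index of the inertia subgroup of `U`. -/
theorem stmt_10 [Field k] [IsAlgClosed k] [Group G] (N : Subgroup G) [N.Normal]
    (hNfi : N.FiniteIndex)
    [AddCommGroup V] [Module k V] [FiniteDimensional k V] [Nontrivial V]
    (ρ : Representation k G V)
    (hsimple : ∀ W : Submodule k V, (∀ g : G, ∀ v ∈ W, ρ g v ∈ W) → W = ⊥ ∨ W = ⊤) :
    ∃ (U : Submodule k V) (t e : ℕ) (g : Fin t → G)
      (W : Fin t → Fin e → Submodule k V),
      0 < t ∧ 0 < e ∧
      IsInvt ρ N U ∧ U ≠ ⊥ ∧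
      (∀ U' : Submodule k V, U' ≤ U → IsInvt ρ N U' → U' = ⊥ ∨ U' = U) ∧
      (∀ i j : Fin t, i ≠ j → ¬NEquiv ρ N (U.map (ρ (g i))) (U.map (ρ (g j)))) ∧
      (∀ x : G, ∃ i : Fin t, NEquiv ρ N (U.map (ρ x)) (U.map (ρ (g i)))) ∧
      (∀ i j, IsInvt ρ N (W i j)) ∧
      (∀ i j, NEquiv ρ N (W i j) (U.map (ρ (g i)))) ∧
      DirectSum.IsInternal (fun q : Fin t × Fin e => W q.1 q.2) := by
  classical
  haveI := hNfi
  have hN : N.Normal := inferInstance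
  -- Step 1: a minimal nonzero invariant submodule
  obtain ⟨U, hUinv, hUne, hUmin⟩ :
      ∃ U : Submodule k V, IsInvt ρ N U ∧ U ≠ ⊥ ∧
        ∀ W : Submodule k V, W ≤ U → IsInvt ρ N W → W = ⊥ ∨ W = U := by
    have hS : ∃ n : ℕ, ∃ U : Submodule k V, IsInvt ρ N U ∧ U ≠ ⊥ ∧ finrank k U = n :=
      ⟨finrank k (⊤ : Submodule k V), ⊤, fun _ _ _ _ => trivial, Ne.symm bot_ne_top, rfl⟩
    obtain ⟨U, hUinv, hUne, hUrk⟩ := Nat.find_spec hS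
    refine ⟨U, hUinv, hUne, fun W hle hWinv => ?_⟩
    by_cases hW : W = ⊥
    · exact Or.inl hW
    · right
      have h1 : Nat.find hS ≤ finrank k W := Nat.find_min' hS ⟨W, hWinv, hW, rfl⟩
      exact Submodule.eq_of_le_of_finrank_le hle (hUrk ▸ h1)
  -- basic facts about conjugates
  set d := finrank k U with hd
  have hdpos : 0 < d := by
    rw [hd]
    rcases Nat.eq_zero_or_pos (finrank k U) with h | h
    · exact absurd (Submodule.finrank_eq_zero.1 h) hUne
    · exact h
  have hconjinv : ∀ g : G, IsInvt ρ N (U.map (ρ g)) := fun g => invt_map ρ N hN hUinv g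
  have hconjne : ∀ g : G, U.map (ρ g) ≠ ⊥ := by
    intro g h
    apply hUne
    have := congrArg (Submodule.map (ρ g⁻¹)) h
    rwa [map_map_rho, inv_mul_cancel, map_rho_one, Submodule.map_bot] at this
  have hconjmin : ∀ g : G, ∀ W : Submodule k V, W ≤ U.map (ρ g) → IsInvt ρ N W →
      W = ⊥ ∨ W = U.map (ρ g) := fun g => min_map ρ N hN hUmin g
  have hconjrk : ∀ g : G, finrank k (U.map (ρ g)) = d :=
    fun g => LinearEquiv.finrank_map_eq (rhoe ρ g) U
  -- Step 3: the sum of all conjugates is ⊤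
  have hsup : (⨆ g : G, U.map (ρ g)) = ⊤ := by
    have hinv : ∀ g : G, ∀ v ∈ (⨆ g' : G, U.map (ρ g')), ρ g v ∈ (⨆ g' : G, U.map (ρ g')) := by
      intro g v hv
      have hmaple : Submodule.map (ρ g) (⨆ g' : G, U.map (ρ g')) ≤ ⨆ g' : G, U.map (ρ g') := by
        rw [Submodule.map_iSup]
        refine iSup_le fun g' => ?_
        rw [map_map_rho]
        exact le_iSup (fun x : G => U.map (ρ x)) (g * g')
      exact hmaple ⟨v, hv, rfl⟩
    rcases hsimple (⨆ g : G, U.map (ρ g)) hinv with h | h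
    · exfalso
      apply hUne
      have hle : U ≤ ⨆ g : G, U.map (ρ g) := by
        have := le_iSup (fun g : G => U.map (ρ g)) 1
        rwa [map_rho_one] at this
      rw [h, le_bot_iff] at hle
      exact hle
    · exact h
  -- Step 4: finiteness of the set of conjugates
  have hresp : ∀ a b : G, (QuotientGroup.leftRel N).r a b → U.map (ρ a) = U.map (ρ b) := by
    intro a b hab
    rw [QuotientGroup.leftRel_apply] at hab
    have : b = a * (a⁻¹ * b) := by group
    rw [this, ← map_map_rho, map_rho_self ρ N hUinv hab]
  have hCfin : (Set.range fun g : G => U.map (ρ g)).Finite := by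
    have hfq : Finite (G ⧸ N) := inferInstance
    have : (Set.range fun g : G => U.map (ρ g)) ⊆
        Set.range (Quotient.lift (fun g : G => U.map (ρ g)) hresp : G ⧸ N → Submodule k V) := by
      rintro S ⟨g, rfl⟩
      exact ⟨QuotientGroup.mk g, rfl⟩
    exact (Set.finite_range _).subset this
  set Cfin : Finset (Submodule k V) := hCfin.toFinset with hCfindef
  have hCmem : ∀ S ∈ Cfin, ∃ x : G, U.map (ρ x) = S := by
    intro S hS
    rw [hCfindef, Set.Finite.mem_toFinset] at hS
    exact hS
  have hCmem' : ∀ x : G, U.map (ρ x) ∈ Cfin := by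
    intro x
    rw [hCfindef, Set.Finite.mem_toFinset]
    exact ⟨x, rfl⟩
  -- every member of Cfin is an invariant minimal nonzero submodule of rank d
  have hCinv : ∀ S ∈ Cfin, IsInvt ρ N S := by
    intro S hS; obtain ⟨x, rfl⟩ := hCmem S hS; exact hconjinv x
  have hCne : ∀ S ∈ Cfin, S ≠ ⊥ := by
    intro S hS; obtain ⟨x, rfl⟩ := hCmem S hS; exact hconjne x
  have hCmin : ∀ S ∈ Cfin, ∀ W : Submodule k V, W ≤ S → IsInvt ρ N W → W = ⊥ ∨ W = S := by
    intro S hS; obtain ⟨x, rfl⟩ := hCmem S hS; exact hconjmin x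
  have hCrk : ∀ S ∈ Cfin, finrank k S = d := by
    intro S hS; obtain ⟨x, rfl⟩ := hCmem S hS; exact hconjrk x
  -- Step 6: a maximal pairwise-nonequivalent subset D of Cfin
  set cand : Finset (Finset (Submodule k V)) :=
    Cfin.powerset.filter
      (fun D => ∀ S ∈ D, ∀ S' ∈ D, S ≠ S' → ¬NEquiv ρ N S S') with hcand
  have hcandne : cand.Nonempty :=
    ⟨∅, by simp [hcand]⟩
  obtain ⟨D, hDcand, hDmax⟩ := cand.exists_max_image Finset.card hcandne
  have hDsub : D ⊆ Cfin := by
    have := (Finset.mem_filter.1 hDcand).1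
    exact Finset.mem_powerset.1 this
  have hDpair : ∀ S ∈ D, ∀ S' ∈ D, S ≠ S' → ¬NEquiv ρ N S S' :=
    (Finset.mem_filter.1 hDcand).2
  have hDcover : ∀ S ∈ Cfin, ∃ S' ∈ D, NEquiv ρ N S S' := by
    intro S hS
    by_contra hno
    push_neg at hno
    have hSD : S ∉ D := fun h => hno S h (nequiv_refl ρ N S)
    have hcand' : insert S D ∈ cand := by
      rw [hcand, Finset.mem_filter]
      refine ⟨Finset.mem_powerset.2 ?_, ?_⟩
      · intro x hx
        rcases Finset.mem_insert.1 hx with rfl | hx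
        · exact hS
        · exact hDsub hx
      · intro a ha b hb hab
        rcases Finset.mem_insert.1 ha with rfl | ha'
        · rcases Finset.mem_insert.1 hb with rfl | hb'
          · exact absurd rfl hab
          · exact hno b hb'
        · rcases Finset.mem_insert.1 hb with rfl | hb'
          · intro hab2
            exact hno a ha' (nequiv_symm ρ N (hCinv a (hDsub ha')) hab2)
          · exact hDpair a ha' b hb' hab
    have := hDmax _ hcand'
    rw [Finset.card_insert_of_notMem hSD] at this
    omega
  -- Step 7: enumerate D, pick group elements
  set t := D.card with ht
  have htpos : 0 < t := by
    have hU1 : U ∈ Cfin := by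
      have := hCmem' (1 : G)
      rwa [map_rho_one] at this
    obtain ⟨S', hS', -⟩ := hDcover U hU1
    rw [ht]
    exact Finset.card_pos.2 ⟨S', hS'⟩
  have hgex : ∀ i : Fin t, ∃ x : G, U.map (ρ x) = ((D.equivFin.symm i : {x // x ∈ D}) : Submodule k V) :=
    fun i => hCmem _ (hDsub (D.equivFin.symm i).2)
  set gf : Fin t → G := fun i => (hgex i).choose with hgf
  have hR : ∀ i : Fin t, U.map (ρ (gf i)) = ((D.equivFin.symm i : {x // x ∈ D}) : Submodule k V) :=
    fun i => (hgex i).choose_spec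
  have hRmem : ∀ i : Fin t, U.map (ρ (gf i)) ∈ D := by
    intro i; rw [hR i]; exact (D.equivFin.symm i).2
  have hRinj : ∀ i j : Fin t, i ≠ j → U.map (ρ (gf i)) ≠ U.map (ρ (gf j)) := by
    intro i j hij h
    rw [hR i, hR j] at h
    exact hij (D.equivFin.symm.injective (Subtype.ext h))
  have hRpair : ∀ i j : Fin t, i ≠ j → ¬NEquiv ρ N (U.map (ρ (gf i))) (U.map (ρ (gf j))) :=
    fun i j hij => hDpair _ (hRmem i) _ (hRmem j) (hRinj i j hij)
  have hRcover : ∀ x : G, ∃ i : Fin t, NEquiv ρ N (U.map (ρ x)) (U.map (ρ (gf i))) := by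
    intro x
    obtain ⟨S', hS'D, hS'eq⟩ := hDcover _ (hCmem' x)
    refine ⟨D.equivFin ⟨S', hS'D⟩, ?_⟩
    have : U.map (ρ (gf (D.equivFin ⟨S', hS'D⟩))) = S' := by
      rw [hR]
      congr 1
      rw [Equiv.symm_apply_apply]
    rw [this]
    exact hS'eq
  -- Step 8: a minimal subset K of Cfin with sSup = ⊤
  set cand2 : Finset (Finset (Submodule k V)) :=
    Cfin.powerset.filter (fun K => sSup (K : Set (Submodule k V)) = ⊤) with hcand2
  have hcand2ne : cand2.Nonempty := by
    refine ⟨Cfin, ?_⟩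
    rw [hcand2, Finset.mem_filter]
    refine ⟨Finset.mem_powerset.2 le_rfl, ?_⟩
    have hcoe : (Cfin : Set (Submodule k V)) = Set.range fun g : G => U.map (ρ g) := by
      rw [hCfindef]; exact Set.Finite.coe_toFinset _
    rw [hcoe, sSup_range]
    exact hsup
  obtain ⟨K, hKcand, hKmin⟩ := cand2.exists_min_image Finset.card hcand2ne
  have hKsub : K ⊆ Cfin := Finset.mem_powerset.1 (Finset.mem_filter.1 hKcand).1
  have hKsup : sSup (K : Set (Submodule k V)) = ⊤ := (Finset.mem_filter.1 hKcand).2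
  have hKdisj : ∀ S ∈ K, Disjoint S (sSup ((K.erase S : Finset (Submodule k V)) : Set (Submodule k V))) := by
    intro S hS
    have hinterinv : IsInvt ρ N (S ⊓ sSup ((K.erase S : Finset (Submodule k V)) : Set (Submodule k V))) := by
      refine invt_inf ρ N (hCinv S (hKsub hS)) (invt_sSup ρ N ?_)
      intro A hA
      simp only [Finset.coe_erase, Set.mem_diff, Finset.mem_coe] at hA
      exact hCinv A (hKsub hA.1)
    rcases hCmin S (hKsub hS) (S ⊓ sSup ((K.erase S : Finset (Submodule k V)) : Set (Submodule k V))) inf_le_left hinterinv with h0 | hSle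
    · exact disjoint_iff.2 h0
    · exfalso
      have hSle' : S ≤ sSup ((K.erase S : Finset (Submodule k V)) : Set (Submodule k V)) := by
        conv_lhs => rw [← hSle]
        exact inf_le_right
      have hseq : sSup ((K.erase S : Finset (Submodule k V)) : Set (Submodule k V)) = ⊤ := by
        rw [← hKsup]
        apply le_antisymm
        · apply sSup_le_sSup
          intro A hA
          simp only [Finset.coe_erase, Set.mem_diff] at hA
          exact hA.1
        · apply sSup_le
          intro A hA
          rcases eq_or_ne A S with rfl | hne
          · exact hSle'
          · exact le_sSup (by simp only [Finset.coe_erase, Set.mem_diff, Finset.mem_coe, Set.mem_singleton_iff]; exact ⟨hA, hne⟩)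
      have hKe : K.erase S ∈ cand2 := by
        rw [hcand2, Finset.mem_filter]
        exact ⟨Finset.mem_powerset.2 (fun x hx => hKsub (Finset.mem_of_mem_erase hx)), hseq⟩
      have := hKmin _ hKe
      have hlt := Finset.card_erase_lt_of_mem hS
      omega
  -- Step 9: classes
  have hclassuniq : ∀ S : Submodule k V, IsInvt ρ N S → ∀ i j : Fin t,
      NEquiv ρ N S (U.map (ρ (gf i))) → NEquiv ρ N S (U.map (ρ (gf j))) → i = j := by
    intro S hSinv i j hi hj
    by_contra hij
    exact hRpair i j hij (nequiv_trans ρ N hSinv (nequiv_symm ρ N hSinv hi) hj)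
  set F : Fin t → Finset (Submodule k V) :=
    fun i => K.filter (fun S => NEquiv ρ N S (U.map (ρ (gf i)))) with hF
  have hFsub : ∀ i, F i ⊆ K := fun i => Finset.filter_subset _ _
  have hFmem : ∀ i, ∀ S, S ∈ F i ↔ S ∈ K ∧ NEquiv ρ N S (U.map (ρ (gf i))) := by
    intro i S; rw [hF]; exact Finset.mem_filter
  -- Step 10: projections
  have hsupeq : ∀ S ∈ K, S ⊔ sSup ((K.erase S : Finset (Submodule k V)) : Set (Submodule k V))
      = ⊤ := by
    intro S hS
    rw [← hKsup]
    conv_rhs => rw [← Finset.insert_erase hS]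
    rw [Finset.coe_insert, sSup_insert]
  have hcompl : ∀ S ∈ K,
      IsCompl S (sSup ((K.erase S : Finset (Submodule k V)) : Set (Submodule k V))) :=
    fun S hS => ⟨hKdisj S hS, codisjoint_iff.2 (hsupeq S hS)⟩
  have hErinv : ∀ S : Submodule k V,
      IsInvt ρ N (sSup ((K.erase S : Finset (Submodule k V)) : Set (Submodule k V))) := by
    intro S
    refine invt_sSup ρ N ?_
    intro A hA
    simp only [Finset.coe_erase, Set.mem_diff, Finset.mem_coe] at hA
    exact hCinv A (hKsub hA.1)
  set prj : Submodule k V → (V →ₗ[k] V) := fun S =>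
    if hS : S ∈ K then S.subtype ∘ₗ Submodule.projectionOnto S _ (hcompl S hS)
    else 0 with hprj
  have hprjmem : ∀ S ∈ K, ∀ v : V, prj S v ∈ S := by
    intro S hS v
    rw [hprj]
    simp only [dif_pos hS, LinearMap.coe_comp, Function.comp_apply, Submodule.coe_subtype]
    exact (Submodule.projectionOnto S _ (hcompl S hS) v).2
  have hprjleft : ∀ S ∈ K, ∀ v ∈ S, prj S v = v := by
    intro S hS v hv
    rw [hprj]
    simp only [dif_pos hS, LinearMap.coe_comp, Function.comp_apply, Submodule.coe_subtype]
    have := Submodule.projectionOnto_apply_left (hcompl S hS) ⟨v, hv⟩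
    rw [show ((⟨v, hv⟩ : S) : V) = v from rfl] at this
    rw [this]
  have hprjright : ∀ S ∈ K, ∀ v ∈ sSup ((K.erase S : Finset (Submodule k V)) : Set (Submodule k V)),
      prj S v = 0 := by
    intro S hS v hv
    rw [hprj]
    simp only [dif_pos hS, LinearMap.coe_comp, Function.comp_apply, Submodule.coe_subtype]
    rw [Submodule.projectionOnto_apply_of_mem_right (hcompl S hS) hv]
    rfl
  have hprjeq : ∀ S ∈ K, ∀ n ∈ N, ∀ v : V, prj S (ρ n v) = ρ n (prj S v) := by
    intro S hS n hn v
    have hvtop : v ∈ S ⊔ sSup ((K.erase S : Finset (Submodule k V)) : Set (Submodule k V)) := by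
      rw [hsupeq S hS]; trivial
    obtain ⟨a, ha, c, hc, rfl⟩ := Submodule.mem_sup.1 hvtop
    have h1 : prj S (a + c) = a := by
      rw [map_add, hprjleft S hS a ha, hprjright S hS c hc, add_zero]
    have h2 : prj S (ρ n (a + c)) = ρ n a := by
      rw [map_add, map_add, hprjleft S hS _ (hCinv S (hKsub hS) n hn a ha),
        hprjright S hS _ (hErinv S n hn c hc), add_zero]
    rw [h1, h2]
  have hsum : ∀ v : V, (∑ S ∈ K, prj S v) = v := by
    intro v
    have hvtop : v ∈ (⨆ S : ((K : Set (Submodule k V))), (S : Submodule k V)) := by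
      rw [← sSup_eq_iSup', hKsup]; trivial
    refine Submodule.iSup_induction (motive := fun x => (∑ S ∈ K, prj S x) = x) _ hvtop ?_ ?_ ?_
    · rintro ⟨S₀, hS₀⟩ x hx
      have hS₀K : S₀ ∈ K := hS₀
      rw [Finset.sum_eq_single_of_mem S₀ hS₀K]
      · exact hprjleft S₀ hS₀K x hx
      · intro S hS hne
        refine hprjright S hS x (Submodule.mem_sSup_of_mem ?_ hx)
        simp only [Finset.coe_erase, Set.mem_diff, Finset.mem_coe, Set.mem_singleton_iff]
        exact ⟨hS₀K, hne.symm⟩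
    · simp
    · intro x y hx hy
      have hsplit : (∑ S ∈ K, prj S (x + y)) = ∑ S ∈ K, (prj S x + prj S y) :=
        Finset.sum_congr rfl fun S _ => map_add _ _ _
      rw [hsplit, Finset.sum_add_distrib, hx, hy]
  -- the isotypic property
  have hiso : ∀ T : Submodule k V, IsInvt ρ N T → T ≠ ⊥ →
      (∀ W' : Submodule k V, W' ≤ T → IsInvt ρ N W' → W' = ⊥ ∨ W' = T) →
      ∀ i : Fin t, NEquiv ρ N T (U.map (ρ (gf i))) →
      T ≤ sSup ((F i : Finset (Submodule k V)) : Set (Submodule k V)) := by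
    intro T hTinv hTne hTmin i hTi v hv
    have hv' : v = ∑ S ∈ K, prj S v := (hsum v).symm
    have hterm : ∀ S ∈ K, prj S v ∈ sSup ((F i : Finset (Submodule k V)) : Set (Submodule k V)) := by
      intro S hS
      by_cases hSF : S ∈ F i
      · exact Submodule.mem_sSup_of_mem (Finset.mem_coe.2 hSF) (hprjmem S hS v)
      · have hnot : ¬ NEquiv ρ N S (U.map (ρ (gf i))) := by
          intro h; exact hSF ((hFmem i S).2 ⟨hS, h⟩)
        rcases schur ρ N hTinv (hCinv S (hKsub hS)) hTne hTmin (hCmin S (hKsub hS))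
            (prj S) (fun n hn w => hprjeq S hS n hn w) (fun w hw => hprjmem S hS w) with h0 | hTS
        · rw [h0 v hv]; exact Submodule.zero_mem _
        · exact absurd (nequiv_trans ρ N hTinv (nequiv_symm ρ N hTinv hTS) hTi) hnot
    rw [hv']
    exact Submodule.sum_mem _ hterm
  -- Step 11: finrank additivity
  have hfr : ∀ Fs : Finset (Submodule k V), Fs ⊆ K →
      finrank k (sSup ((Fs : Set (Submodule k V))) : Submodule k V) = ∑ S ∈ Fs, finrank k S := by
    intro Fs
    induction Fs using Finset.induction_on with
    | empty =>
      intro _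
      rw [Finset.coe_empty, sSup_empty, Finset.sum_empty]
      exact finrank_bot k V
    | @insert S Fs hSFs ih =>
      intro hsub
      have hSK : S ∈ K := hsub (Finset.mem_insert_self S Fs)
      have hFs : Fs ⊆ K := fun A hA => hsub (Finset.mem_insert_of_mem hA)
      have hdisj : Disjoint S (sSup ((Fs : Set (Submodule k V)))) := by
        refine (hKdisj S hSK).mono_right (sSup_le_sSup ?_)
        intro A hA
        simp only [Finset.coe_erase, Set.mem_diff, Finset.mem_coe, Set.mem_singleton_iff]
        refine ⟨hFs hA, fun hAS => hSFs (hAS ▸ hA)⟩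
      rw [Finset.coe_insert, sSup_insert, Finset.sum_insert hSFs, ← ih hFs]
      have hkey := Submodule.finrank_sup_add_finrank_inf_eq S (sSup ((Fs : Set (Submodule k V))))
      rw [disjoint_iff.1 hdisj] at hkey
      rw [finrank_bot k V] at hkey
      omega
  -- Step 13: equal fiber sizes
  have hmaple : ∀ (i j : Fin t) (h : G), U.map (ρ (h * gf i)) = U.map (ρ (gf j)) →
      Submodule.map (ρ h) (sSup ((F i : Finset (Submodule k V)) : Set (Submodule k V))) ≤
        sSup ((F j : Finset (Submodule k V)) : Set (Submodule k V)) := by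
    intro i j h heq
    rw [sSup_eq_iSup', Submodule.map_iSup]
    refine iSup_le ?_
    rintro ⟨S, hSF⟩
    have hSF' : S ∈ F i := Finset.mem_coe.1 hSF
    have hSK : S ∈ K := hFsub i hSF'
    have hSNE : NEquiv ρ N S (U.map (ρ (gf i))) := ((hFmem i S).1 hSF').2
    obtain ⟨x, hx⟩ := hCmem S (hKsub hSK)
    have hmapinv : IsInvt ρ N (S.map (ρ h)) := invt_map ρ N hN (hCinv S (hKsub hSK)) h
    have hmapeq : S.map (ρ h) = U.map (ρ (h * x)) := by rw [← hx, map_map_rho]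
    refine hiso (S.map (ρ h)) hmapinv ?_ ?_ j ?_
    · rw [hmapeq]; exact hconjne _
    · rw [hmapeq]; exact hconjmin _
    · have := nequiv_map ρ N hN (hCinv S (hKsub hSK)) hSNE h
      rwa [map_map_rho, heq] at this
  have hfrle : ∀ i j : Fin t,
      finrank k (sSup ((F i : Finset (Submodule k V)) : Set (Submodule k V)) : Submodule k V) ≤
      finrank k (sSup ((F j : Finset (Submodule k V)) : Set (Submodule k V)) : Submodule k V) := by
    intro i j
    have heq : U.map (ρ ((gf j * (gf i)⁻¹) * gf i)) = U.map (ρ (gf j)) := by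
      congr 2
      group
    have hle := hmaple i j (gf j * (gf i)⁻¹) heq
    calc finrank k (sSup ((F i : Finset (Submodule k V)) : Set (Submodule k V)) : Submodule k V)
        = finrank k ((sSup ((F i : Finset (Submodule k V)) : Set (Submodule k V))).map
            (ρ (gf j * (gf i)⁻¹)) : Submodule k V) :=
          (LinearEquiv.finrank_map_eq (rhoe ρ (gf j * (gf i)⁻¹)) _).symm
      _ ≤ _ := Submodule.finrank_mono hle
  have hfcard : ∀ i : Fin t,
      finrank k (sSup ((F i : Finset (Submodule k V)) : Set (Submodule k V)) : Submodule k V)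
        = (F i).card * d := by
    intro i
    rw [hfr (F i) (hFsub i)]
    rw [Finset.sum_congr rfl (fun S hS => hCrk S (hKsub (hFsub i hS)))]
    rw [Finset.sum_const, smul_eq_mul]
  have hcards : ∀ i j : Fin t, (F i).card = (F j).card := by
    intro i j
    have h1 := hfrle i j
    have h2 := hfrle j i
    rw [hfcard i, hfcard j] at h1 h2
    have := le_antisymm h1 h2
    exact Nat.eq_of_mul_eq_mul_right hdpos this
  -- Step 14: nonempty fibers
  have hFne : ∀ i : Fin t, (F i).Nonempty := by
    intro i
    by_contra hne
    rw [Finset.not_nonempty_iff_eq_empty] at hne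
    have hle := hiso (U.map (ρ (gf i))) (hconjinv _) (hconjne _) (hconjmin _) i
      (nequiv_refl ρ N _)
    rw [hne] at hle
    simp only [Finset.coe_empty, sSup_empty, le_bot_iff] at hle
    exact hconjne _ hle
  -- Step 15: the decomposition family
  set i0 : Fin t := ⟨0, htpos⟩ with hi0
  set e := (F i0).card with he
  have hepos : 0 < e := Finset.card_pos.2 (hFne i0)
  have hecard : ∀ i : Fin t, (F i).card = e := fun i => hcards i i0
  set Wf : Fin t → Fin e → Submodule k V :=
    fun i j => ((F i).equivFin.symm (Fin.cast (hecard i).symm j) : Submodule k V) with hWf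
  have hWmem : ∀ i j, Wf i j ∈ F i := fun i j => ((F i).equivFin.symm _).2
  have hWK : ∀ i j, Wf i j ∈ K := fun i j => hFsub i (hWmem i j)
  have hWNE : ∀ i j, NEquiv ρ N (Wf i j) (U.map (ρ (gf i))) :=
    fun i j => ((hFmem i _).1 (hWmem i j)).2
  have hWinj : ∀ q q' : Fin t × Fin e, Wf q.1 q.2 = Wf q'.1 q'.2 → q = q' := by
    rintro ⟨i, j⟩ ⟨i', j'⟩ h
    have h2 := hWNE i' j'
    rw [← h] at h2
    have hii : i = i' := hclassuniq (Wf i j) (hCinv _ (hKsub (hWK i j))) i i' (hWNE i j) h2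
    subst hii
    have h3 : (F i).equivFin.symm (Fin.cast (hecard i).symm j)
        = (F i).equivFin.symm (Fin.cast (hecard i).symm j') := Subtype.ext h
    have h4 := (F i).equivFin.symm.injective h3
    have h5 := congrArg Fin.val h4
    exact congrArg (Prod.mk i) (Fin.ext h5)
  have hKW : ∀ S ∈ K, ∃ q : Fin t × Fin e, Wf q.1 q.2 = S := by
    intro S hS
    obtain ⟨x, hx⟩ := hCmem S (hKsub hS)
    obtain ⟨i, hi⟩ := hRcover x
    rw [hx] at hi
    have hSFi : S ∈ F i := (hFmem i S).2 ⟨hS, hi⟩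
    refine ⟨⟨i, Fin.cast (hecard i) ((F i).equivFin ⟨S, hSFi⟩)⟩, ?_⟩
    show ((F i).equivFin.symm (Fin.cast (hecard i).symm
        (Fin.cast (hecard i) ((F i).equivFin ⟨S, hSFi⟩))) : Submodule k V) = S
    have hcast : Fin.cast (hecard i).symm (Fin.cast (hecard i) ((F i).equivFin ⟨S, hSFi⟩))
        = (F i).equivFin ⟨S, hSFi⟩ := Fin.ext rfl
    rw [hcast, Equiv.symm_apply_apply]
  -- Step 16: conclusion
  refine ⟨U, t, e, gf, Wf, htpos, hepos, hUinv, hUne, hUmin, hRpair, hRcover, ?_, ?_, ?_⟩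
  · intro i j; exact hCinv _ (hKsub (hWK i j))
  · intro i j; exact hWNE i j
  · apply DirectSum.isInternal_submodule_of_iSupIndep_of_iSup_eq_top
    · intro q
      refine (hKdisj _ (hWK q.1 q.2)).mono_right ?_
      refine iSup_le fun q' => iSup_le fun hne => le_sSup ?_
      simp only [Finset.coe_erase, Set.mem_diff, Finset.mem_coe, Set.mem_singleton_iff]
      exact ⟨hWK q'.1 q'.2, fun h => hne (hWinj q' q h)⟩
    · apply le_antisymm le_top
      rw [← hKsup]
      refine sSup_le fun S hS => ?_
      obtain ⟨q, rfl⟩ := hKW S (Finset.mem_coe.1 hS)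
      exact le_iSup (fun q : Fin t × Fin e => Wf q.1 q.2) q
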